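/- Let G be a second countable locally compact Hausdorff topological group with left Haar measure μ and let ω be a Borel 2-cocycle on G. On L²(G×G, μ×μ) define U by (Uξ)(s,t) = ω(t⁻¹s,s⁻¹)·ξ(s,s⁻¹t). Then U is a well-defined unitary operator, and for every g ∈ G one has U ∘ L_g ∘ U* = Λ_g, where L_g is the unitary (L_g ξ)(s,t) = ξ(g⁻¹s,t) and Λ_g is the unitary (Λ_g ξ)(s,t) = ω(s⁻¹,g)·\overline{ω(t⁻¹,g)}·ξ(g⁻¹s,g⁻¹t). (In the notation of the paper: Wω̃(λ_g⊗1)ω̃*W* = λ^ω_g ⊗ λ^{ω̄}_g.) -/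

import Mathlib

open MeasureTheory

section Helper

variable {α : Type*} [MeasurableSpace α] {μ : Measure α}

theorem memLp_mulComp {c : α → ℂ} (hc : Measurable c)
    (hcabs : ∀ p, ‖c p‖ = 1) {T : α → α} (hT : MeasurePreserving T μ μ)
    {f : α → ℂ} (hf : MemLp f 2 μ) : MemLp (fun p => c p * f (T p)) 2 μ := by
  have h1 : MemLp (f ∘ T) 2 μ := hf.comp_measurePreserving hT
  refine ⟨hc.aestronglyMeasurable.mul h1.1, ?_⟩
  have heq : eLpNorm (fun p => c p * f (T p)) 2 μ = eLpNorm (f ∘ T) 2 μ := by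
    apply eLpNorm_congr_norm_ae
    filter_upwards with p
    simp [map_mul, hcabs p, Function.comp]
  rw [heq]
  exact h1.2

theorem mulComp_ae_congr {c : α → ℂ} {T : α → α}
    (hT : Measure.QuasiMeasurePreserving T μ μ) {f g : α → ℂ} (h : f =ᵐ[μ] g) :
    (fun p => c p * f (T p)) =ᵐ[μ] fun p => c p * g (T p) := by
  have := hT.ae_eq_comp h
  filter_upwards [this] with p hp
  simp only [Function.comp] at hp
  rw [hp]

theorem measurable_conjComp {c : α → ℂ} (hc : Measurable c) (T : α ≃ᵐ α) :
    Measurable fun p => (starRingEnd ℂ) (c (T.symm p)) :=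
  Complex.continuous_conj.measurable.comp (hc.comp T.symm.measurable)

theorem abs_conjComp {c : α → ℂ} (hcabs : ∀ p, ‖c p‖ = 1) (T : α ≃ᵐ α) :
    ∀ p, ‖(starRingEnd ℂ) (c (T.symm p))‖ = 1 := fun p => by
  rw [Complex.norm_conj]; exact hcabs _

theorem unim_conj_mul {z : ℂ} (h : ‖z‖ = 1) : (starRingEnd ℂ) z * z = 1 := by
  rw [mul_comm, Complex.mul_conj, ← Complex.sq_norm, h]; norm_num

/-- The unitary `ξ ↦ c · (ξ ∘ T)` on `L²`. -/
noncomputable def mulCompLIE (μ : Measure α) (c : α → ℂ) (T : α ≃ᵐ α) (hc : Measurable c)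
    (hcabs : ∀ p, ‖c p‖ = 1) (hT : MeasurePreserving T μ μ) :
    Lp ℂ 2 μ ≃ₗᵢ[ℂ] Lp ℂ 2 μ where
  toFun ξ := MemLp.toLp _ (memLp_mulComp hc hcabs hT (Lp.memLp ξ))
  invFun ξ := MemLp.toLp _
    (memLp_mulComp (measurable_conjComp hc T) (abs_conjComp hcabs T) (hT.symm T) (Lp.memLp ξ))
  map_add' ξ η := by
    apply Lp.ext
    have h1 : (fun p => c p * (((ξ + η : Lp ℂ 2 μ) : α → ℂ)) (T p)) =ᵐ[μ]
        fun p => c p * (ξ : α → ℂ) (T p) + c p * (η : α → ℂ) (T p) := by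
      refine (mulComp_ae_congr hT.quasiMeasurePreserving (Lp.coeFn_add ξ η)).trans ?_
      filter_upwards with p
      simp [mul_add]
    refine (MemLp.coeFn_toLp _).trans (h1.trans ?_)
    exact ((Lp.coeFn_add _ _).trans ((MemLp.coeFn_toLp _).add (MemLp.coeFn_toLp _))).symm
  map_smul' a ξ := by
    apply Lp.ext
    have h1 : (fun p => c p * (((a • ξ : Lp ℂ 2 μ) : α → ℂ)) (T p)) =ᵐ[μ]
        fun p => a * (c p * (ξ : α → ℂ) (T p)) := by
      refine (mulComp_ae_congr hT.quasiMeasurePreserving (Lp.coeFn_smul a ξ)).trans ?_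
      filter_upwards with p
      simp only [Pi.smul_apply, smul_eq_mul]
      ring
    refine (MemLp.coeFn_toLp _).trans (h1.trans ?_)
    refine ((Lp.coeFn_smul _ _).trans ?_).symm
    filter_upwards [MemLp.coeFn_toLp (memLp_mulComp hc hcabs hT (Lp.memLp ξ))] with p hp
    simp [hp]
  left_inv ξ := by
    apply Lp.ext
    dsimp only
    refine (MemLp.coeFn_toLp _).trans ?_
    refine ((mulComp_ae_congr ((hT.symm T).quasiMeasurePreserving)
      (MemLp.coeFn_toLp (memLp_mulComp hc hcabs hT (Lp.memLp ξ)))).trans ?_)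
    filter_upwards with p
    simp only [T.apply_symm_apply, ← mul_assoc, unim_conj_mul (hcabs _), one_mul]
  right_inv ξ := by
    apply Lp.ext
    dsimp only
    refine (MemLp.coeFn_toLp _).trans ?_
    refine ((mulComp_ae_congr (hT.quasiMeasurePreserving)
      (MemLp.coeFn_toLp (memLp_mulComp (measurable_conjComp hc T) (abs_conjComp hcabs T)
        (hT.symm T) (Lp.memLp ξ)))).trans ?_)
    filter_upwards with p
    simp only [T.symm_apply_apply]
    rw [← mul_assoc, mul_comm (c p), unim_conj_mul (hcabs _), one_mul]
  norm_map' ξ := by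
    show ‖MemLp.toLp _ (memLp_mulComp hc hcabs hT (Lp.memLp ξ))‖ = ‖ξ‖
    rw [Lp.norm_toLp, Lp.norm_def]
    congr 1
    have heq : eLpNorm (fun p => c p * (ξ : α → ℂ) (T p)) 2 μ
        = eLpNorm ((ξ : α → ℂ) ∘ T) 2 μ := by
      apply eLpNorm_congr_norm_ae
      filter_upwards with p
      simp [map_mul, hcabs p, Function.comp]
    rw [heq, eLpNorm_comp_measurePreserving (Lp.aestronglyMeasurable ξ) hT]

theorem mulCompLIE_coeFn (μ : Measure α) (c : α → ℂ) (T : α ≃ᵐ α) (hc : Measurable c)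
    (hcabs : ∀ p, ‖c p‖ = 1) (hT : MeasurePreserving T μ μ) (ξ : Lp ℂ 2 μ) :
    (mulCompLIE μ c T hc hcabs hT ξ : α → ℂ) =ᵐ[μ] fun p => c p * ξ (T p) :=
  MemLp.coeFn_toLp (memLp_mulComp hc hcabs hT (Lp.memLp ξ))

theorem mulCompLIE_symm_coeFn (μ : Measure α) (c : α → ℂ) (T : α ≃ᵐ α) (hc : Measurable c)
    (hcabs : ∀ p, ‖c p‖ = 1) (hT : MeasurePreserving T μ μ) (ξ : Lp ℂ 2 μ) :
    ((mulCompLIE μ c T hc hcabs hT).symm ξ : α → ℂ) =ᵐ[μ]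
      fun p => (starRingEnd ℂ) (c (T.symm p)) * ξ (T.symm p) :=
  MemLp.coeFn_toLp (memLp_mulComp (measurable_conjComp hc T) (abs_conjComp hcabs T)
    (hT.symm T) (Lp.memLp ξ))

end Helper
section Equivs

variable {G : Type*} [MeasurableSpace G] [Group G] [MeasurableMul₂ G] [MeasurableInv G]

/-- `(s,t) ↦ (s, s⁻¹t)` as a measurable equiv. -/
def shearEquiv : G × G ≃ᵐ G × G :=
  ⟨⟨fun p => (p.1, p.1⁻¹ * p.2), fun p => (p.1, p.1 * p.2),
    fun p => by simp, fun p => by simp⟩,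
    measurable_fst.prodMk (measurable_fst.inv.mul measurable_snd),
    measurable_fst.prodMk (measurable_fst.mul measurable_snd)⟩

@[simp] theorem shearEquiv_apply (p : G × G) : shearEquiv p = (p.1, p.1⁻¹ * p.2) := rfl
@[simp] theorem shearEquiv_symm_apply (p : G × G) :
    (shearEquiv (G := G)).symm p = (p.1, p.1 * p.2) := rfl

omit [MeasurableInv G] in
/-- `(s,t) ↦ (as, bt)` as a measurable equiv. -/
def translEquiv (a b : G) : G × G ≃ᵐ G × G :=
  ⟨⟨fun p => (a * p.1, b * p.2), fun p => (a⁻¹ * p.1, b⁻¹ * p.2),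
    fun p => by simp, fun p => by simp⟩,
    (measurable_fst.const_mul a).prodMk (measurable_snd.const_mul b),
    (measurable_fst.const_mul a⁻¹).prodMk (measurable_snd.const_mul b⁻¹)⟩

omit [MeasurableInv G] in
@[simp] theorem translEquiv_apply (a b : G) (p : G × G) :
    translEquiv a b p = (a * p.1, b * p.2) := rfl

end Equivs

/-- On `L²(G×G)` define `U` by `(Uξ)(s,t) = ω(t⁻¹s,s⁻¹)·ξ(s,s⁻¹t)`. Then `U` is a well-defined
unitary and `U ∘ L_g ∘ U* = Λ_g` for every `g`, where `(L_g ξ)(s,t) = ξ(g⁻¹s,t)` and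
`(Λ_g ξ)(s,t) = ω(s⁻¹,g)·conj(ω(t⁻¹,g))·ξ(g⁻¹s,g⁻¹t)`.
(In the paper's notation: `Wω̃(λ_g⊗1)ω̃*W* = λ^ω_g ⊗ λ^{ω̄}_g`.) -/
theorem stmt_8 {G : Type*} [TopologicalSpace G] [Group G] [IsTopologicalGroup G]
    [SecondCountableTopology G] [LocallyCompactSpace G] [T2Space G]
    [MeasurableSpace G] [BorelSpace G]
    (μ : Measure G) [μ.IsHaarMeasure]
    (ω : G → G → ℂ)
    (hmeas : Measurable fun p : G × G => ω p.1 p.2)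
    (habs : ∀ g h : G, ‖ω g h‖ = 1)
    (hcoc : ∀ g h k : G, ω g h * ω (g * h) k = ω g (h * k) * ω h k) :
    ∃ U : Lp ℂ 2 (μ.prod μ) ≃ₗᵢ[ℂ] Lp ℂ 2 (μ.prod μ),
      (∀ ξ : Lp ℂ 2 (μ.prod μ), (U ξ : G × G → ℂ) =ᵐ[μ.prod μ]
        fun p => ω (p.2⁻¹ * p.1) p.1⁻¹ * ξ (p.1, p.1⁻¹ * p.2)) ∧
      ∀ g : G,
        (∃ L : Lp ℂ 2 (μ.prod μ) ≃ₗᵢ[ℂ] Lp ℂ 2 (μ.prod μ),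
          ∀ ξ : Lp ℂ 2 (μ.prod μ), (L ξ : G × G → ℂ) =ᵐ[μ.prod μ]
            fun p => ξ (g⁻¹ * p.1, p.2)) ∧
        (∃ Lam : Lp ℂ 2 (μ.prod μ) ≃ₗᵢ[ℂ] Lp ℂ 2 (μ.prod μ),
          ∀ ξ : Lp ℂ 2 (μ.prod μ), (Lam ξ : G × G → ℂ) =ᵐ[μ.prod μ]
            fun p => ω p.1⁻¹ g * starRingEnd ℂ (ω p.2⁻¹ g) * ξ (g⁻¹ * p.1, g⁻¹ * p.2)) ∧
        (∀ L Lam : Lp ℂ 2 (μ.prod μ) ≃ₗᵢ[ℂ] Lp ℂ 2 (μ.prod μ),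
          (∀ ξ : Lp ℂ 2 (μ.prod μ), (L ξ : G × G → ℂ) =ᵐ[μ.prod μ]
            fun p => ξ (g⁻¹ * p.1, p.2)) →
          (∀ ξ : Lp ℂ 2 (μ.prod μ), (Lam ξ : G × G → ℂ) =ᵐ[μ.prod μ]
            fun p => ω p.1⁻¹ g * starRingEnd ℂ (ω p.2⁻¹ g) * ξ (g⁻¹ * p.1, g⁻¹ * p.2)) →
          ∀ ξ : Lp ℂ 2 (μ.prod μ), U (L (U.symm ξ)) = Lam ξ) := by
  -- data for `U`
  set cU : G × G → ℂ := fun p => ω (p.2⁻¹ * p.1) p.1⁻¹ with hcU_def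
  have hcU : Measurable cU :=
    hmeas.comp ((measurable_snd.inv.mul measurable_fst).prodMk measurable_fst.inv)
  have habsU : ∀ p, ‖cU p‖ = 1 := fun p => habs _ _
  have hTU : MeasurePreserving (⇑(shearEquiv (G := G))) (μ.prod μ) (μ.prod μ) :=
    measurePreserving_prod_inv_mul μ μ
  refine ⟨mulCompLIE (μ.prod μ) cU shearEquiv hcU habsU hTU,
    fun ξ => mulCompLIE_coeFn _ _ _ _ _ _ ξ, fun g => ?_⟩
  have hTtr : ∀ a b : G, MeasurePreserving (⇑(translEquiv a b)) (μ.prod μ) (μ.prod μ) :=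
    fun a b => (measurePreserving_mul_left μ a).prod (measurePreserving_mul_left μ b)
  have habs1 : ∀ p : G × G, ‖(fun _ : G × G => (1:ℂ)) p‖ = 1 := fun p => by simp
  have hcLam : Measurable fun p : G × G => ω p.1⁻¹ g * (starRingEnd ℂ) (ω p.2⁻¹ g) :=
    (hmeas.comp (measurable_fst.inv.prodMk measurable_const)).mul
      (Complex.continuous_conj.measurable.comp
        (hmeas.comp (measurable_snd.inv.prodMk measurable_const)))
  have habsLam : ∀ p : G × G,
      ‖ω p.1⁻¹ g * (starRingEnd ℂ) (ω p.2⁻¹ g)‖ = 1 := fun p => by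
    rw [norm_mul, Complex.norm_conj, habs, habs, mul_one]
  refine ⟨?_, ?_, ?_⟩
  · -- existence of L
    refine ⟨mulCompLIE (μ.prod μ) (fun _ => 1) (translEquiv g⁻¹ 1) measurable_const habs1
      (hTtr g⁻¹ 1), fun ξ => ?_⟩
    refine (mulCompLIE_coeFn _ _ _ _ _ _ ξ).trans (Filter.Eventually.of_forall fun p => ?_)
    simp
  · -- existence of Λ
    refine ⟨mulCompLIE (μ.prod μ) (fun p => ω p.1⁻¹ g * (starRingEnd ℂ) (ω p.2⁻¹ g))
      (translEquiv g⁻¹ g⁻¹) hcLam habsLam (hTtr g⁻¹ g⁻¹), fun ξ => ?_⟩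
    exact mulCompLIE_coeFn _ _ _ _ _ _ ξ
  · -- the intertwining identity
    intro L Lam hL hLam ξ
    apply Lp.ext
    -- scalar cocycle identity
    have key : ∀ s t : G, ω (t⁻¹ * s) s⁻¹ * (starRingEnd ℂ) (ω (t⁻¹ * s) (s⁻¹ * g))
        = ω s⁻¹ g * (starRingEnd ℂ) (ω t⁻¹ g) := by
      intro s t
      have hz : ω (t⁻¹ * s) s⁻¹ * ω t⁻¹ g = ω (t⁻¹ * s) (s⁻¹ * g) * ω s⁻¹ g := by
        have := hcoc (t⁻¹ * s) s⁻¹ g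
        rwa [mul_inv_cancel_right] at this
      set a := ω (t⁻¹ * s) s⁻¹
      set b := ω (t⁻¹ * s) (s⁻¹ * g)
      set cc := ω s⁻¹ g
      set d := ω t⁻¹ g
      calc a * (starRingEnd ℂ) b
          = a * (starRingEnd ℂ) b * ((starRingEnd ℂ) d * d) := by
            rw [unim_conj_mul (habs _ _), mul_one]
        _ = (a * d) * ((starRingEnd ℂ) b * (starRingEnd ℂ) d) := by ring
        _ = (b * cc) * ((starRingEnd ℂ) b * (starRingEnd ℂ) d) := by rw [hz]
        _ = cc * (starRingEnd ℂ) d * ((starRingEnd ℂ) b * b) := by ring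
        _ = cc * (starRingEnd ℂ) d := by rw [unim_conj_mul (habs _ _), mul_one]
    have h3 := mulCompLIE_symm_coeFn (μ.prod μ) cU shearEquiv hcU habsU hTU ξ
    have h3' := (hTtr g⁻¹ 1).quasiMeasurePreserving.ae_eq_comp h3
    have h2 : ⇑(L ((mulCompLIE (μ.prod μ) cU shearEquiv hcU habsU hTU).symm ξ))
        =ᵐ[μ.prod μ] fun p : G × G =>
          (starRingEnd ℂ) (cU (shearEquiv.symm (translEquiv g⁻¹ 1 p)))
            * ξ (shearEquiv.symm (translEquiv g⁻¹ 1 p)) := by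
      refine (hL _).trans ?_
      refine h3'.mono fun p hp => ?_
      simpa using hp
    have h2' := hTU.quasiMeasurePreserving.ae_eq_comp h2
    have h1 := mulCompLIE_coeFn (μ.prod μ) cU shearEquiv hcU habsU hTU
      (L ((mulCompLIE (μ.prod μ) cU shearEquiv hcU habsU hTU).symm ξ))
    refine (h1.trans ?_).trans (hLam ξ).symm
    refine h2'.mono fun p hp => ?_
    simp only [Function.comp_apply] at hp
    dsimp only
    rw [hp]
    obtain ⟨s, t⟩ := p
    simp only [shearEquiv_apply, shearEquiv_symm_apply, translEquiv_apply, hcU_def]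
    have e1 : (g⁻¹ * s * (1 * (s⁻¹ * t)))⁻¹ * (g⁻¹ * s) = t⁻¹ * s := by group
    have e2 : (g⁻¹ * s)⁻¹ = s⁻¹ * g := by group
    have e3 : g⁻¹ * s * (1 * (s⁻¹ * t)) = g⁻¹ * t := by group
    rw [e1, e2, e3, ← mul_assoc, key s t]
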